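/- Let n ≥ 2, let M be an n-connected binary matroid with |E(M)| ≥ 2n-2, and let T ⊆ E(M) with |T| = n-1. Suppose that for every cocircuit Q of M intersecting T we have |Q| ≥ 2|Q ∩ T|. Then for every subset A ⊆ E(M) with |A| = n-2, there exists a circuit C of M contained in E(M) \ A with |C ∩ T| odd. -/

import Mathlib

open Set

variable {α : Type*}

/-- The rank of a set `X` in a matroid `M`: the maximum size of an independent subset of `X`. -/
noncomputable def mrank (M : Matroid α) (X : Set α) : ℕ :=
  sSup {n | ∃ I, M.Indep I ∧ I ⊆ X ∧ I.ncard = n}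

/-- `(A, B)` is a `k`-separation of `M`: a partition of the ground set with both sides of
size at least `k` and `r(A) + r(B) - r(M) ≤ k - 1` (written additively). -/
def IsKSeparation (M : Matroid α) (k : ℕ) (A B : Set α) : Prop :=
  A ∪ B = M.E ∧ Disjoint A B ∧ k ≤ A.ncard ∧ k ≤ B.ncard ∧
    mrank M A + mrank M B + 1 ≤ mrank M M.E + k

/-- `M` is `n`-connected if it has no `k`-separation for any `k < n`. -/
def NConnected (M : Matroid α) (n : ℕ) : Prop :=
  ∀ k A B, 1 ≤ k → k < n → ¬ IsKSeparation M k A B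

/-- A circuit is a minimal dependent set. -/
def MCircuit (M : Matroid α) (C : Set α) : Prop := Minimal M.Dep C

/-- A cocircuit is a circuit of the dual matroid. -/
def MCocircuit (M : Matroid α) (C : Set α) : Prop := MCircuit M✶ C

/-- A loop is a dependent singleton. -/
def MLoop (M : Matroid α) (e : α) : Prop := M.Dep {e}

/-- A coloop is a loop of the dual, i.e. an element lying in every base. -/
def MColoop (M : Matroid α) (e : α) : Prop := M✶.Dep {e}

/-- `M` is the vector matroid of the family of vectors `φ` over `GF(2)`:
a set is independent iff it lies in the ground set and the corresponding
vectors are linearly independent. -/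
def IsRep {W : Type*} [AddCommGroup W] [Module (ZMod 2) W] (M : Matroid α) (φ : α → W) : Prop :=
  ∀ I : Set α, M.Indep I ↔ I ⊆ M.E ∧ LinearIndependent (ZMod 2) (I.restrict φ)

open scoped Classical in
/-- The columns of the element splitting matrix `A'_T`: each original column gets an extra
coordinate (the new row), equal to `1` exactly on the columns labelled by `T`, and a new
column `a` which is `1` in the new row and `0` elsewhere. -/
noncomputable def splitRep {W : Type*} [AddCommGroup W] [Module (ZMod 2) W]
    (φ : α → W) (T : Set α) (a : α) : α → W × ZMod 2 :=
  fun x => if x = a then (0, 1) else (φ x, if x ∈ T then 1 else 0)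

/-- `N` is the element splitting matroid `M'_T` of the binary matroid `M` (represented by `φ`)
with respect to `T`, with new element `a`. -/
def IsEleSplit {W : Type*} [AddCommGroup W] [Module (ZMod 2) W]
    (M : Matroid α) (φ : α → W) (T : Set α) (a : α) (N : Matroid α) : Prop :=
  a ∉ M.E ∧ N.E = insert a M.E ∧ IsRep N (splitRep φ T a)

/-- `M` is the contraction `N / a` of the single element `a` from `N`. -/
def ContractElemEq (N : Matroid α) (a : α) (M : Matroid α) : Prop :=
  M.E = N.E \ {a} ∧ ∀ I : Set α,
    M.Indep I ↔ a ∉ I ∧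
      ((N.Indep {a} ∧ N.Indep (insert a I)) ∨ (¬ N.Indep {a} ∧ N.Indep I))

section Helpers

open Submodule

variable {W : Type*} [AddCommGroup W] [Module (ZMod 2) W] {M : Matroid α} {φ : α → W}

lemma zmod2cases (z : ZMod 2) : z = 0 ∨ z = 1 := by revert z; decide

lemma zmod2add {a b : ZMod 2} (h : a + b = 0) : a = b := by revert a b; decide

lemma wadd_self (x : W) : x + x = 0 := by
  have h : x + x = (1 + 1 : ZMod 2) • x := by rw [add_smul, one_smul]
  rw [h, show (1 + 1 : ZMod 2) = 0 by decide, zero_smul]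

lemma dep_of_sum (hM : IsRep M φ) {s : Finset α} (hsE : ↑s ⊆ M.E)
    (hne : s.Nonempty) (hsum : ∑ i ∈ s, φ i = 0) : M.Dep ↑s := by
  classical
  refine ⟨fun hind => ?_, hsE⟩
  have hli : LinearIndependent (ZMod 2) ((↑s : Set α).restrict φ) := ((hM _).1 hind).2
  have hli' := linearIndepOn_iff.mp hli
  set l : α →₀ ZMod 2 :=
    ⟨s, fun a => if a ∈ s then 1 else 0, by intro a; by_cases h : a ∈ s <;> simp [h]⟩ with hl
  have hsupp : l ∈ Finsupp.supported (ZMod 2) (ZMod 2) ↑s := by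
    rw [Finsupp.mem_supported]
  have hcomb : Finsupp.linearCombination (ZMod 2) φ l = 0 := by
    rw [Finsupp.linearCombination_apply, Finsupp.sum]
    rw [show l.support = s from rfl]
    rw [← hsum]
    refine Finset.sum_congr rfl fun a ha => ?_
    have : l a = 1 := by simp [hl, ha]
    rw [this, one_smul]
  have := hli' l hsupp hcomb
  obtain ⟨a, ha⟩ := hne
  have hla : l a = 1 := by simp [hl, ha]
  rw [this] at hla
  simp at hla

lemma circuit_sum (hM : IsRep M φ) {C : Set α} (hC : MCircuit M C) :
    ∃ s : Finset α, ↑s = C ∧ s.Nonempty ∧ ∑ i ∈ s, φ i = 0 := by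
  classical
  have hdep := hC.1
  have hCE : C ⊆ M.E := hdep.2
  have hnotli : ¬ LinearIndependent (ZMod 2) (C.restrict φ) := by
    intro h
    exact hdep.1 ((hM C).2 ⟨hCE, h⟩)
  have h2 : ¬ ∀ l ∈ Finsupp.supported (ZMod 2) (ZMod 2) C,
      Finsupp.linearCombination (ZMod 2) φ l = 0 → l = 0 := by
    intro h
    exact hnotli (linearIndepOn_iff.mpr h)
  push_neg at h2
  obtain ⟨l, hlsupp, hlcomb, hlne⟩ := h2
  refine ⟨l.support, ?_, Finsupp.support_nonempty_iff.mpr hlne, ?_⟩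
  · have hsub : ↑l.support ⊆ C := (Finsupp.mem_supported _ _).mp hlsupp
    have hdepS : M.Dep ↑l.support := by
      refine dep_of_sum hM (hsub.trans hCE) (Finsupp.support_nonempty_iff.mpr hlne) ?_
      rw [← hlcomb, Finsupp.linearCombination_apply, Finsupp.sum]
      refine Finset.sum_congr rfl fun a ha => ?_
      rcases zmod2cases (l a) with h | h
      · exact absurd h (Finsupp.mem_support_iff.mp ha)
      · rw [h, one_smul]
    exact le_antisymm hsub (hC.2 hdepS hsub)
  · have hdepS : ↑l.support ⊆ C := (Finsupp.mem_supported _ _).mp hlsupp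
    rw [← hlcomb, Finsupp.linearCombination_apply, Finsupp.sum]
    refine (Finset.sum_congr rfl fun a ha => ?_).symm
    rcases zmod2cases (l a) with h | h
    · exact absurd h (Finsupp.mem_support_iff.mp ha)
    · rw [h, one_smul]

lemma exists_circuit_subset {M : Matroid α} {D : Set α} (hfin : D.Finite) (hD : M.Dep D) :
    ∃ C, C ⊆ D ∧ MCircuit M C := by
  classical
  generalize hm : D.ncard = m
  induction m using Nat.strong_induction_on generalizing D with
  | _ m ih =>
    by_cases h : Minimal M.Dep D
    · exact ⟨D, Subset.rfl, h⟩
    · have hex : ∃ D', M.Dep D' ∧ D' ⊆ D ∧ ¬ D ⊆ D' := by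
        by_contra h'
        push_neg at h'
        exact h ⟨hD, fun y hy hle => h' y hy hle⟩
      obtain ⟨D', hD', hsub, hne⟩ := hex
      have hss : D' ⊂ D := lt_of_le_not_ge hsub hne
      obtain ⟨C, hCsub, hC⟩ := ih D'.ncard (hm ▸ Set.ncard_lt_ncard hss hfin)
        (hfin.subset hsub) hD' rfl
      exact ⟨C, hCsub.trans hsub, hC⟩

lemma span_basis (hM : IsRep M φ) {I X : Set α} (hI : M.IsBasis I X) :
    span (ZMod 2) (φ '' I) = span (ZMod 2) (φ '' X) := by
  refine le_antisymm (span_mono (image_mono hI.subset)) (span_le.2 ?_)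
  rintro w ⟨x, hx, rfl⟩
  by_cases hxI : x ∈ I
  · exact subset_span ⟨x, hxI, rfl⟩
  · have hdep := hI.insert_dep ⟨hx, hxI⟩
    have hliI : LinearIndependent (ZMod 2) (I.restrict φ) := ((hM I).1 hI.indep).2
    have hnot : ¬ LinearIndependent (ZMod 2) ((insert x I).restrict φ) := by
      intro h
      exact hdep.1 ((hM _).2 ⟨hdep.2, h⟩)
    by_contra hmem
    exact hnot ((linearIndepOn_insert hxI).2 ⟨hliI, hmem⟩)

lemma base_of_spanning (hM : IsRep M φ) {X : Set α} (hX : X ⊆ M.E)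
    (hsp : span (ZMod 2) (φ '' X) = span (ZMod 2) (φ '' M.E)) :
    ∃ B, M.IsBase B ∧ B ⊆ X := by
  obtain ⟨I, hI⟩ := M.exists_isBasis X hX
  refine ⟨I, ?_, hI.subset⟩
  rw [Matroid.isBase_iff_maximal_indep]
  refine ⟨hI.indep, fun J hJ hIJ => ?_⟩
  intro x hxJ
  by_contra hxI
  have hliJ : LinearIndependent (ZMod 2) (J.restrict φ) := ((hM J).1 hJ).2
  have hsub : insert x I ⊆ J := insert_subset hxJ hIJ
  have hli : LinearIndependent (ZMod 2) ((insert x I).restrict φ) :=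
    hliJ.comp (Set.inclusion hsub) (Set.inclusion_injective hsub)
  have hmem : φ x ∈ span (ZMod 2) (φ '' I) := by
    rw [span_basis hM hI, hsp]
    exact subset_span ⟨x, ((hM J).1 hJ).1 hxJ, rfl⟩
  exact ((linearIndepOn_insert hxI).1 hli).2 hmem

lemma finrank_span_indep (hM : IsRep M φ) (hfin : M.E.Finite) {I : Set α}
    (hI : M.Indep I) : Module.finrank (ZMod 2) (span (ZMod 2) (φ '' I)) = I.ncard := by
  have hIE : I ⊆ M.E := ((hM I).1 hI).1
  have hIfin : I.Finite := hfin.subset hIE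
  haveI := hIfin.fintype
  have hli : LinearIndependent (ZMod 2) (I.restrict φ) := ((hM I).1 hI).2
  rw [show φ '' I = Set.range (I.restrict φ) from Set.image_eq_range φ I,
    finrank_span_eq_card hli, ← Nat.card_coe_set_eq, Nat.card_eq_fintype_card]

lemma mrank_eq (hM : IsRep M φ) (hfin : M.E.Finite) {X : Set α} (hX : X ⊆ M.E) :
    mrank M X = Module.finrank (ZMod 2) (span (ZMod 2) (φ '' X)) := by
  haveI : FiniteDimensional (ZMod 2) (span (ZMod 2) (φ '' X)) :=
    FiniteDimensional.span_of_finite _ ((hfin.subset hX).image φ)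
  refine le_antisymm (csSup_le ⟨0, ∅, M.empty_indep, empty_subset _, by simp⟩ ?_) ?_
  · rintro k ⟨I, hI, hIX, rfl⟩
    rw [← finrank_span_indep hM hfin hI]
    exact Submodule.finrank_mono (span_mono (image_mono hIX))
  · obtain ⟨I, hI⟩ := M.exists_isBasis X hX
    have hr : Module.finrank (ZMod 2) (span (ZMod 2) (φ '' X)) = I.ncard := by
      rw [← span_basis hM hI, finrank_span_indep hM hfin hI.indep]
    rw [hr]
    refine le_csSup ⟨X.ncard, ?_⟩ ⟨I, hI.indep, hI.subset, rfl⟩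
    rintro k ⟨J, hJ, hJX, rfl⟩
    exact Set.ncard_le_ncard hJX (hfin.subset hX)

lemma mrank_le_ncard (hfin : M.E.Finite) {X : Set α} (hX : X ⊆ M.E) :
    mrank M X ≤ X.ncard := by
  refine csSup_le ⟨0, ∅, M.empty_indep, empty_subset _, by simp⟩ ?_
  rintro k ⟨J, hJ, hJX, rfl⟩
  exact Set.ncard_le_ncard hJX (hfin.subset hX)

lemma cocircuit_card_ge (hM : IsRep M φ) (hfin : M.E.Finite) {n : ℕ}
    (hcard : 2 * n - 2 ≤ M.E.ncard) (hconn : NConnected M n) {Q : Set α}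
    (hQc : MCocircuit M Q) : n ≤ Q.ncard := by
  by_contra hlt
  push_neg at hlt
  have hQE : Q ⊆ M.E := hQc.1.2
  have hQne : Q.Nonempty := by
    rcases Set.eq_empty_or_nonempty Q with rfl | h
    · exact absurd M✶.empty_indep hQc.1.1
    · exact h
  have hQfin : Q.Finite := hfin.subset hQE
  set H := M.E \ Q with hH
  have hHE : H ⊆ M.E := diff_subset
  have hspan : span (ZMod 2) (φ '' H) ≠ span (ZMod 2) (φ '' M.E) := by
    intro heq
    obtain ⟨B, hB, hBH⟩ := base_of_spanning hM hHE heq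
    exact hQc.1.1 ((Matroid.dual_indep_iff_exists').2
      ⟨hQE, B, hB, ((subset_diff.1 hBH).2).symm⟩)
  set k := Q.ncard with hk
  have hk1 : 1 ≤ k := (Set.ncard_pos hQfin).2 hQne
  have hQle : k ≤ M.E.ncard := Set.ncard_le_ncard hQE hfin
  have hHcard : k ≤ H.ncard := by
    have h1 : H.ncard = M.E.ncard - k := Set.ncard_diff hQE hQfin
    omega
  have hrQ : mrank M Q ≤ k := mrank_le_ncard hfin hQE
  have hrH : mrank M H + 1 ≤ mrank M M.E := by
    rw [mrank_eq hM hfin hHE, mrank_eq hM hfin Subset.rfl]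
    have hlt' : span (ZMod 2) (φ '' H) < span (ZMod 2) (φ '' M.E) :=
      lt_of_le_of_ne (span_mono (image_mono hHE)) hspan
    haveI : FiniteDimensional (ZMod 2) (span (ZMod 2) (φ '' M.E)) :=
      FiniteDimensional.span_of_finite _ (hfin.image φ)
    exact Submodule.finrank_lt_finrank_of_lt hlt'
  refine hconn k Q H hk1 hlt ⟨union_diff_cancel hQE, Set.disjoint_sdiff_right, le_refl _,
    hHcard, by omega⟩

end Helpers


section Cocirc

open Submodule

variable {α : Type*} {W : Type*} [AddCommGroup W] [Module (ZMod 2) W] {M : Matroid α} {φ : α → W}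

lemma exists_cocircuit (hM : IsRep M φ) (hfin : M.E.Finite)
    (g : W →ₗ[ZMod 2] ZMod 2) (hne : {e ∈ M.E | g (φ e) = 1}.Nonempty) :
    ∃ Q : Set α, ∃ gQ : W →ₗ[ZMod 2] ZMod 2, MCocircuit M Q ∧
      Q ⊆ {e ∈ M.E | g (φ e) = 1} ∧ {e ∈ M.E | gQ (φ e) = 1} = Q := by
  classical
  set D := {e ∈ M.E | g (φ e) = 1} with hD
  have hDE : D ⊆ M.E := sep_subset _ _
  -- the complement of D is not spanning
  have hker : ∀ X : Set α, X ⊆ M.E \ D → span (ZMod 2) (φ '' X) ≤ LinearMap.ker g := by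
    intro X hX
    rw [span_le]
    rintro w ⟨x, hx, rfl⟩
    obtain ⟨hxE, hxD⟩ := hX hx
    rcases zmod2cases (g (φ x)) with h | h
    · exact h
    · exact absurd (⟨hxE, h⟩ : x ∈ D) hxD
  have hNS : span (ZMod 2) (φ '' (M.E \ D)) ≠ span (ZMod 2) (φ '' M.E) := by
    intro heq
    obtain ⟨e, heE, hge⟩ := hne
    have hmem : φ e ∈ span (ZMod 2) (φ '' M.E) := subset_span ⟨e, heE, rfl⟩
    rw [← heq] at hmem
    have := hker _ Subset.rfl hmem
    rw [LinearMap.mem_ker] at this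
    rw [hge] at this
    exact one_ne_zero this
  -- choose a maximal non-spanning superset of M.E \ D
  set 𝓗 : Set (Set α) :=
    {H | M.E \ D ⊆ H ∧ H ⊆ M.E ∧ span (ZMod 2) (φ '' H) ≠ span (ZMod 2) (φ '' M.E)} with h𝓗
  have h𝓗fin : 𝓗.Finite := hfin.finite_subsets.subset (fun H hH => hH.2.1)
  have h𝓗ne : 𝓗.Nonempty := ⟨M.E \ D, Subset.rfl, diff_subset, hNS⟩
  obtain ⟨H, hH, hHmax⟩ := Set.Finite.exists_maximalFor id 𝓗 h𝓗fin h𝓗ne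
  obtain ⟨hHD, hHE, hHns⟩ := hH
  set Q := M.E \ H with hQdef
  have hQD : Q ⊆ D := by
    rintro e ⟨heE, heH⟩
    by_contra heD
    exact heH (hHD ⟨heE, heD⟩)
  have hQne : Q.Nonempty := by
    rcases Set.eq_empty_or_nonempty Q with hQe | h
    · exfalso
      apply hHns
      have : M.E ⊆ H := by
        intro e he
        by_contra heH
        have : e ∈ Q := ⟨he, heH⟩
        rw [hQe] at this
        exact this
      have : H = M.E := le_antisymm hHE this
      rw [this]
    · exact h
  obtain ⟨e0, he0⟩ := hQne
  -- maximality consequences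
  have hmax' : ∀ e ∈ Q, span (ZMod 2) (φ '' (insert e H)) = span (ZMod 2) (φ '' M.E) := by
    intro e he
    by_contra hne'
    have hmem : insert e H ∈ 𝓗 :=
      ⟨hHD.trans (subset_insert _ _), insert_subset he.1 hHE, hne'⟩
    have := hHmax hmem (subset_insert _ _)
    simp only [id] at this
    exact he.2 (this (mem_insert e H))
  have hnotin : ∀ e ∈ Q, φ e ∉ span (ZMod 2) (φ '' H) := by
    intro e he hmem
    apply hHns
    rw [← hmax' e he, image_insert_eq, span_insert_eq_span hmem]
  have hdecomp : ∀ e ∈ Q, ∃ z ∈ span (ZMod 2) (φ '' H), φ e = z + φ e0 := by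
    intro e he
    have hmem : φ e ∈ span (ZMod 2) (φ '' (insert e0 H)) := by
      rw [hmax' e0 he0]
      exact subset_span ⟨e, he.1, rfl⟩
    rw [image_insert_eq, span_insert] at hmem
    obtain ⟨y, hy, z, hz, hyz⟩ := mem_sup.1 hmem
    obtain ⟨c, rfl⟩ := mem_span_singleton.1 hy
    rcases zmod2cases c with rfl | rfl
    · rw [zero_smul, zero_add] at hyz
      exact absurd (hyz ▸ hz) (hnotin e he)
    · rw [one_smul] at hyz
      exact ⟨z, hz, by rw [← hyz, add_comm]⟩
  -- build the functional gQ
  set P := span (ZMod 2) (φ '' H) with hP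
  set y : W ⧸ P := Submodule.Quotient.mk (φ e0) with hy
  have hy0 : y ≠ 0 := by
    rw [hy, Ne, Submodule.Quotient.mk_eq_zero]
    exact hnotin e0 he0
  obtain ⟨q, hq⟩ := Submodule.exists_isCompl (span (ZMod 2) ({y} : Set (W ⧸ P)))
  set proj := Submodule.linearProjOfIsCompl _ q hq with hproj
  set coo := LinearEquiv.coord (ZMod 2) (W ⧸ P) y hy0 with hcoo
  set gQ : W →ₗ[ZMod 2] ZMod 2 := (coo.toLinearMap ∘ₗ proj) ∘ₗ P.mkQ with hgQ
  have hgQP : ∀ w ∈ P, gQ w = 0 := by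
    intro w hw
    rw [hgQ]
    simp only [LinearMap.comp_apply]
    rw [show P.mkQ w = 0 from (Submodule.Quotient.mk_eq_zero P).2 hw]
    rw [map_zero, map_zero]
  have hgQe0 : gQ (φ e0) = 1 := by
    rw [hgQ]
    simp only [LinearMap.comp_apply]
    have h1 : P.mkQ (φ e0) = y := rfl
    rw [h1]
    have h2 : proj y = ⟨y, mem_span_singleton_self y⟩ :=
      Submodule.linearProjOfIsCompl_apply_left hq ⟨y, mem_span_singleton_self y⟩
    rw [h2]
    exact LinearEquiv.coord_self (ZMod 2) (W ⧸ P) y hy0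
  have hgQQ : ∀ e ∈ Q, gQ (φ e) = 1 := by
    intro e he
    obtain ⟨z, hz, hdz⟩ := hdecomp e he
    rw [hdz, map_add, hgQP z hz, hgQe0, zero_add]
  have hcyc : {e ∈ M.E | gQ (φ e) = 1} = Q := by
    ext e
    constructor
    · rintro ⟨heE, hge⟩
      by_contra heQ
      have heH : e ∈ H := by
        by_contra h'
        exact heQ ⟨heE, h'⟩
      have : gQ (φ e) = 0 := hgQP _ (subset_span ⟨e, heH, rfl⟩)
      rw [this] at hge
      exact one_ne_zero hge.symm
    · intro he
      exact ⟨he.1, hgQQ e he⟩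
  -- Q is a cocircuit
  refine ⟨Q, gQ, ⟨⟨?_, ?_⟩, ?_⟩, hQD, hcyc⟩
  · -- Q is dependent in the dual
    intro hind
    rw [Matroid.dual_indep_iff_exists'] at hind
    obtain ⟨-, B, hB, hdisj⟩ := hind
    have hBH : B ⊆ H := by
      intro b hb
      by_contra hbH
      have hbE : b ∈ M.E := hB.subset_ground hb
      exact (disjoint_right.1 hdisj) hb ⟨hbE, hbH⟩
    apply hHns
    refine le_antisymm (span_mono (image_mono hHE)) ?_
    rw [← span_basis hM hB.isBasis_ground]
    exact span_mono (image_mono hBH)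
  · rw [Matroid.dual_ground]
    exact diff_subset
  · -- minimality
    intro Q' hQ' hQ'sub
    by_contra hQsub
    have hex : ∃ e, e ∈ Q ∧ e ∉ Q' := by
      by_contra h'
      push_neg at h'
      exact hQsub h'
    obtain ⟨e, heQ, heQ'⟩ := hex
    have hQ'E : Q' ⊆ M.E := hQ'.2
    have hsub2 : insert e H ⊆ M.E \ Q' := by
      refine insert_subset ⟨heQ.1, heQ'⟩ ?_
      intro x hx
      exact ⟨hHE hx, fun hxQ' => (hQ'sub hxQ').2 hx⟩
    have hspan2 : span (ZMod 2) (φ '' (M.E \ Q')) = span (ZMod 2) (φ '' M.E) := by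
      refine le_antisymm (span_mono (image_mono diff_subset)) ?_
      rw [← hmax' e heQ]
      exact span_mono (image_mono hsub2)
    obtain ⟨B, hB, hBsub⟩ := base_of_spanning hM diff_subset hspan2
    refine hQ'.1 ((Matroid.dual_indep_iff_exists').2 ⟨hQ'E, B, hB, ?_⟩)
    exact ((subset_diff.1 hBsub).2).symm

end Cocirc

open Submodule

/-- If every cocircuit Q of M intersecting T satisfies |Q| ≥ 2|Q ∩ T|, then for every
A ⊆ E(M) with |A| = n - 2 there is a circuit C of M avoiding A and meeting T in an odd
number of elements. -/
theorem circuit_cond_of_cocircuit_cond {α W : Type*}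
    [AddCommGroup W] [Module (ZMod 2) W]
    (n : ℕ) (hn : 2 ≤ n) (M : Matroid α) (φ : α → W) (hM : IsRep M φ)
    (hfin : M.E.Finite) (hcard : 2 * n - 2 ≤ M.E.ncard) (hconn : NConnected M n)
    (T : Set α) (hT : T ⊆ M.E) (hTcard : T.ncard = n - 1)
    (hQ : ∀ Q : Set α, MCocircuit M Q → (Q ∩ T).Nonempty → 2 * (Q ∩ T).ncard ≤ Q.ncard) :
    ∀ A ⊆ M.E, A.ncard = n - 2 →
      ∃ C : Set α, MCircuit M C ∧ C ⊆ M.E \ A ∧ Odd ((C ∩ T).ncard) := by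
  classical
  intro A hA hAcard
  by_contra hcon
  push_neg at hcon
  set χ : α → ZMod 2 := fun e => if e ∈ T then 1 else 0 with hχ
  set S : Set α := M.E \ A with hS
  have hSE : S ⊆ M.E := diff_subset
  -- parity helper
  have hparity : ∀ s : Finset α, (∑ c ∈ s, χ c = 0) ↔ Even (((s : Set α) ∩ T).ncard) := by
    intro s
    have h1 : ∑ c ∈ s, χ c = (((s.filter (· ∈ T)).card : ℕ) : ZMod 2) := by
      rw [hχ]
      exact Finset.sum_boole _ _
    have h2 : ((s : Set α) ∩ T).ncard = (s.filter (· ∈ T)).card := by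
      rw [← Set.ncard_coe_finset (s.filter (· ∈ T))]
      congr 1
      ext x
      simp [Set.mem_inter_iff, Finset.mem_coe, Finset.mem_filter, and_comm]
    rw [h1, h2, ZMod.natCast_eq_zero_iff]
    exact (even_iff_two_dvd).symm
  -- Step B : every subset-sum relation inside S has even intersection with T
  have hB : ∀ m (C : Finset α), C.card = m → (C : Set α) ⊆ S → ∑ c ∈ C, φ c = 0 →
      ∑ c ∈ C, χ c = 0 := by
    intro m
    induction m using Nat.strong_induction_on with
    | _ m ih =>
      intro C hCm hCS hCsum
      rcases C.eq_empty_or_nonempty with rfl | hCne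
      · simp
      · have hdep : M.Dep ↑C := dep_of_sum hM (hCS.trans hSE) hCne hCsum
        obtain ⟨C0, hC0sub, hC0⟩ := exists_circuit_subset C.finite_toSet hdep
        obtain ⟨s0, hs0coe, hs0ne, hs0sum⟩ := circuit_sum hM hC0
        have hs0C : s0 ⊆ C := by
          rw [← Finset.coe_subset, hs0coe]; exact hC0sub
        have hEven : ∑ c ∈ s0, χ c = 0 := by
          rw [hparity s0, hs0coe]
          exact Nat.not_odd_iff_even.1 (hcon C0 hC0 (hC0sub.trans hCS))
        have hlt : (C \ s0).card < m := by
          rw [← hCm]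
          exact Finset.card_lt_card (Finset.sdiff_ssubset hs0C hs0ne)
        have hsum' : ∑ c ∈ C \ s0, φ c = 0 := by
          have h := Finset.sum_sdiff (f := φ) hs0C
          rw [hs0sum, add_zero] at h
          rw [h, hCsum]
        have hsubS : ((C \ s0 : Finset α) : Set α) ⊆ S :=
          (Finset.coe_subset.mpr (Finset.sdiff_subset)).trans hCS
        have hrest := ih _ hlt (C \ s0) rfl hsubS hsum'
        calc ∑ c ∈ C, χ c = ∑ c ∈ C \ s0, χ c + ∑ c ∈ s0, χ c := (Finset.sum_sdiff hs0C).symm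
        _ = 0 := by rw [hrest, hEven, add_zero]
  -- basis of S and the functional g
  obtain ⟨I, hI⟩ := M.exists_isBasis S hSE
  have hIS : I ⊆ S := hI.subset
  have hIfin : I.Finite := hfin.subset (hIS.trans hSE)
  have hli : LinearIndependent (ZMod 2) (I.restrict φ) := ((hM I).1 hI.indep).2
  set P0 := span (ZMod 2) (Set.range (I.restrict φ)) with hP0
  have hP0eq : P0 = span (ZMod 2) (φ '' I) := by
    rw [hP0]
    congr 1
    exact (Set.image_eq_range φ I).symm
  let b : Module.Basis ↥I (ZMod 2) P0 := Module.Basis.span hli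
  obtain ⟨q, hq⟩ := Submodule.exists_isCompl P0
  set proj := Submodule.linearProjOfIsCompl _ q hq with hprojdef
  set f : P0 →ₗ[ZMod 2] ZMod 2 := (Module.Basis.constr b (ZMod 2)) (fun i => χ ↑i) with hf
  set g : W →ₗ[ZMod 2] ZMod 2 := f ∘ₗ (proj : W →ₗ[ZMod 2] P0) with hg
  have hgP : ∀ (w : W) (hw : w ∈ P0), g w = f ⟨w, hw⟩ := by
    intro w hw
    have h := Submodule.linearProjOfIsCompl_apply_left hq ⟨w, hw⟩
    show f (proj w) = f ⟨w, hw⟩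
    exact congrArg f h
  have hmemI : ∀ s ∈ S, φ s ∈ P0 := by
    intro s hs
    rw [hP0eq, span_basis hM hI]
    exact subset_span ⟨s, hs, rfl⟩
  have hgI : ∀ (i : α) (hi : i ∈ I), g (φ i) = χ i := by
    intro i hi
    rw [hgP (φ i) (hmemI i (hIS hi))]
    have hb : b ⟨i, hi⟩ = ⟨φ i, hmemI i (hIS hi)⟩ := by
      apply Subtype.ext
      exact congrArg Subtype.val (Module.Basis.span_apply hli ⟨i, hi⟩)
    rw [← hb, hf]
    exact Module.Basis.constr_basis b (ZMod 2) _ ⟨i, hi⟩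
  have hinj : ∀ x ∈ hIfin.toFinset, ∀ y ∈ hIfin.toFinset, φ x = φ y → x = y := by
    intro a ha b' hb' h
    rw [Set.Finite.mem_toFinset] at ha hb'
    have h2 := hli.injective (a₁ := ⟨a, ha⟩) (a₂ := ⟨b', hb'⟩) h
    exact congrArg Subtype.val h2
  have hmem_sum : ∀ x ∈ P0, ∃ J : Finset α, ↑J ⊆ I ∧ x = ∑ i ∈ J, φ i := by
    intro x hx
    rw [hP0eq] at hx
    have himg : φ '' I = ↑(hIfin.toFinset.image φ) := by
      rw [Finset.coe_image, Set.Finite.coe_toFinset]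
    rw [himg] at hx
    obtain ⟨c, hc⟩ := mem_span_finset.1 hx
    rw [Finset.sum_image hinj] at hc
    refine ⟨hIfin.toFinset.filter (fun i => c (φ i) = 1), ?_, ?_⟩
    · intro i hi
      rw [Finset.mem_coe, Finset.mem_filter, Set.Finite.mem_toFinset] at hi
      exact hi.1
    · rw [Finset.sum_filter, ← hc.2]
      refine (Finset.sum_congr rfl fun i _ => ?_).symm
      rcases zmod2cases (c (φ i)) with h | h
      · simp [h]
      · simp [h]
  -- g agrees with χ on S
  have hgS : ∀ s ∈ S, g (φ s) = χ s := by
    intro s hs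
    obtain ⟨J, hJI, hsum⟩ := hmem_sum (φ s) (hmemI s hs)
    have hgsum : g (φ s) = ∑ i ∈ J, χ i := by
      rw [hsum, map_sum]
      exact Finset.sum_congr rfl fun i hi => hgI i (hJI hi)
    by_cases hsJ : s ∈ J
    · have herase : ∑ i ∈ J.erase s, φ i = 0 := by
        have h := Finset.add_sum_erase J φ hsJ
        rw [← hsum] at h
        exact (left_eq_add.1 h.symm)
      have h0 := hB _ (J.erase s) rfl
        (((Finset.coe_subset.mpr (Finset.erase_subset s J)).trans hJI).trans hIS) herase
      rw [hgsum, ← Finset.add_sum_erase J χ hsJ, h0, add_zero]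
    · have hCsum : ∑ i ∈ insert s J, φ i = 0 := by
        rw [Finset.sum_insert hsJ, ← hsum]
        exact wadd_self (φ s)
      have hsubS : ((insert s J : Finset α) : Set α) ⊆ S := by
        rw [Finset.coe_insert]
        exact Set.insert_subset hs (hJI.trans hIS)
      have h0 := hB _ (insert s J) rfl hsubS hCsum
      rw [Finset.sum_insert hsJ] at h0
      rw [hgsum, ← zmod2add h0]
  -- the induction on cocycles
  have hIND : ∀ m (g' : W →ₗ[ZMod 2] ZMod 2), ({e ∈ M.E | g' (φ e) = 1}).ncard = m →
      {e ∈ M.E | g' (φ e) = 1} ⊆ T ∪ A →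
      2 * (({e ∈ M.E | g' (φ e) = 1}) ∩ T).ncard ≤ ({e ∈ M.E | g' (φ e) = 1}).ncard := by
    intro m
    induction m using Nat.strong_induction_on with
    | _ m ih =>
      intro g' hm hsub
      set D := {e ∈ M.E | g' (φ e) = 1} with hD
      have hDfin : D.Finite := hfin.subset (sep_subset _ _)
      rcases D.eq_empty_or_nonempty with hDe | hDne
      · rw [hDe]
        simp
      · obtain ⟨Q, gQ, hQc, hQD, hQeq⟩ := exists_cocircuit hM hfin g' hDne
        have hQn : n ≤ Q.ncard := cocircuit_card_ge hM hfin hcard hconn hQc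
        have hQfin : Q.Finite := hDfin.subset hQD
        have hQT : (Q ∩ T).Nonempty := by
          rw [Set.nonempty_iff_ne_empty]
          intro hQT
          have hQA : Q ⊆ A := by
            intro x hx
            rcases hsub (hQD hx) with hxT | hxA
            · exfalso
              have hmem : x ∈ Q ∩ T := ⟨hx, hxT⟩
              rw [hQT] at hmem
              exact hmem
            · exact hxA
          have := Set.ncard_le_ncard hQA (hfin.subset hA)
          omega
        have h2Q := hQ Q hQc hQT
        have hQne : Q.Nonempty := ⟨hQT.choose, hQT.choose_spec.1⟩
        have hD'eq : {e ∈ M.E | (g' + gQ) (φ e) = 1} = D \ Q := by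
          ext e
          simp only [Set.mem_setOf_eq, Set.mem_sep_iff, Set.mem_diff, LinearMap.add_apply]
          constructor
          · rintro ⟨heE, hsum⟩
            have heQ : e ∉ Q := by
              intro heQ
              have h1 : gQ (φ e) = 1 := by
                have : e ∈ {e ∈ M.E | gQ (φ e) = 1} := by rw [hQeq]; exact heQ
                exact this.2
              have h2 : g' (φ e) = 1 := (hQD heQ).2
              rw [h1, h2] at hsum
              exact one_ne_zero (by rw [show ((1 : ZMod 2) + 1) = 0 by decide] at hsum; exact hsum.symm)
            have h1 : gQ (φ e) = 0 := by
              rcases zmod2cases (gQ (φ e)) with h | h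
              · exact h
              · exact absurd (show e ∈ Q by rw [← hQeq]; exact ⟨heE, h⟩) heQ
            rw [h1, add_zero] at hsum
            exact ⟨⟨heE, hsum⟩, heQ⟩
          · rintro ⟨⟨heE, hg'e⟩, heQ⟩
            have h1 : gQ (φ e) = 0 := by
              rcases zmod2cases (gQ (φ e)) with h | h
              · exact h
              · exact absurd (show e ∈ Q by rw [← hQeq]; exact ⟨heE, h⟩) heQ
            exact ⟨heE, by rw [hg'e, h1, add_zero]⟩
        have hQsubD : Q ⊆ D := hQD
        have hdcard : (D \ Q).ncard = D.ncard - Q.ncard := Set.ncard_diff hQsubD hQfin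
        have hQle : Q.ncard ≤ D.ncard := Set.ncard_le_ncard hQsubD hDfin
        have hQpos : 1 ≤ Q.ncard := (Set.ncard_pos hQfin).2 hQne
        have hlt : (D \ Q).ncard < m := by omega
        have hIH := ih _ hlt (g' + gQ) (by rw [hD'eq])
          (by rw [hD'eq]; exact (diff_subset.trans hsub))
        rw [hD'eq] at hIH
        have hsplit : (D ∩ T).ncard = (Q ∩ T).ncard + ((D \ Q) ∩ T).ncard := by
          have hun : D ∩ T = (Q ∩ T) ∪ ((D \ Q) ∩ T) := by
            rw [← Set.union_inter_distrib_right, Set.union_diff_cancel hQsubD]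
          rw [hun, Set.ncard_union_eq
            ((Set.disjoint_sdiff_right).mono inter_subset_left inter_subset_left)
            (hQfin.inter_of_left _) ((hDfin.diff).inter_of_left _)]
        omega
  -- apply everything to the cocycle of g
  set Dstar := {e ∈ M.E | g (φ e) = 1} with hDstar
  have hDsfin : Dstar.Finite := hfin.subset (sep_subset _ _)
  have hsubTA : Dstar ⊆ T ∪ A := by
    rintro e ⟨heE, hge⟩
    by_cases heA : e ∈ A
    · exact Or.inr heA
    · left
      have heS : e ∈ S := ⟨heE, heA⟩
      rw [hgS e heS] at hge
      simp only [hχ] at hge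
      by_contra heT
      rw [if_neg heT] at hge
      exact one_ne_zero hge.symm
  have hineq := hIND Dstar.ncard g (by rw [hDstar]) (by rw [← hDstar]; exact hsubTA)
  rw [← hDstar] at hineq
  have hTsub : T \ A ⊆ Dstar ∩ T := by
    rintro e ⟨heT, heA⟩
    have heS : e ∈ S := ⟨hT heT, heA⟩
    refine ⟨?_, heT⟩
    rw [hDstar]
    refine ⟨hT heT, ?_⟩
    rw [hgS e heS]
    simp [hχ, heT]
  have h1 : (Dstar ∩ T).ncard + (Dstar \ T).ncard = Dstar.ncard :=
    Set.ncard_inter_add_ncard_diff_eq_ncard Dstar T hDsfin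
  have h2 : (T \ A).ncard ≤ (Dstar ∩ T).ncard :=
    Set.ncard_le_ncard hTsub (hDsfin.inter_of_left _)
  have h3 : Dstar \ T ⊆ A \ T := fun e he => ⟨(hsubTA he.1).resolve_left he.2, he.2⟩
  have h4 : (Dstar \ T).ncard ≤ (A \ T).ncard := Set.ncard_le_ncard h3 ((hfin.subset hA).diff)
  have h5 : (T ∩ A).ncard + (T \ A).ncard = T.ncard :=
    Set.ncard_inter_add_ncard_diff_eq_ncard T A (hfin.subset hT)
  have h6 : (A ∩ T).ncard + (A \ T).ncard = A.ncard :=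
    Set.ncard_inter_add_ncard_diff_eq_ncard A T (hfin.subset hA)
  have h7 : (T ∩ A).ncard = (A ∩ T).ncard := by rw [Set.inter_comm]
  omega
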